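/- arXiv:1509.00447 — 2 statements merged into one kernel-verified Lean document; each statement's English description precedes it below -/
import Mathlib

section
/- The metric space (F_B(ℝ^m)^p, d_p) is complete. -/
open Metric Set MeasureTheory Filter

noncomputable section

/-- `Em m` is the Euclidean space ℝ^m. -/
abbrev Em (m : ℕ) := EuclideanSpace ℝ (Fin m)

/-- A set is star-shaped if it contains a point `x` such that the segment from `x`
to any point of the set lies in the set. -/
def StarShaped {m : ℕ} (K : Set (Em m)) : Prop :=
  ∃ x ∈ K, ∀ y ∈ K, segment ℝ x y ⊆ K

/-- The kernel of a set: all points seeing the whole set. -/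
def kern {m : ℕ} (K : Set (Em m)) : Set (Em m) :=
  {x | x ∈ K ∧ ∀ y ∈ K, segment ℝ x y ⊆ K}

/-- Kuratowski upper limit of a sequence of sets. -/
def KLimsup {m : ℕ} (C : ℕ → Set (Em m)) : Set (Em m) :=
  ⋂ n : ℕ, closure (⋃ k : ℕ, ⋃ _ : n ≤ k, C k)

/-- Kuratowski lower limit of a sequence of sets. -/
def KLiminf {m : ℕ} (C : ℕ → Set (Em m)) : Set (Em m) :=
  {x | ∃ f : ℕ → Em m, (∀ n, f n ∈ C n) ∧ Tendsto f atTop (nhds x)}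

/-- The α-cut of a fuzzy set `u`, for α > 0. -/
def acut {m : ℕ} (u : Em m → ℝ) (a : ℝ) : Set (Em m) := {x | a ≤ u x}

/-- The support (0-cut) of a fuzzy set. -/
def fsupp {m : ℕ} (u : Em m → ℝ) : Set (Em m) := closure {x | 0 < u x}

/-- Membership in `F_B(ℝ^m)^p`: normal, upper semi-continuous fuzzy sets with
compact α-cuts for α ∈ (0,1] and α ↦ H([u]_α, {0})^p integrable on (0,1]. -/
structure IsFuzzyBp {m : ℕ} (p : ℝ) (u : Em m → ℝ) : Prop where
  mem01 : ∀ x, u x ∈ Icc (0:ℝ) 1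
  normal : ∃ x, u x = 1
  usc : UpperSemicontinuous u
  compactCuts : ∀ a ∈ Ioc (0:ℝ) 1, IsCompact (acut u a)
  lp : IntegrableOn (fun a => hausdorffDist (acut u a) ({0} : Set (Em m)) ^ p)
        (Ioc (0:ℝ) 1)

/-- Membership in `F_B(ℝ^m)`: normal, upper semi-continuous fuzzy sets with
bounded (hence compact closed) support. -/
structure IsFuzzyB {m : ℕ} (u : Em m → ℝ) : Prop where
  mem01 : ∀ x, u x ∈ Icc (0:ℝ) 1
  normal : ∃ x, u x = 1
  usc : UpperSemicontinuous u
  bddSupp : Bornology.IsBounded {x | 0 < u x}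

/-- The `d_p` metric on fuzzy sets. -/
def dp {m : ℕ} (p : ℝ) (u v : Em m → ℝ) : ℝ :=
  (∫ a in Ioc (0:ℝ) 1, hausdorffDist (acut u a) (acut v a) ^ p) ^ (1/p)

/-- `d_p` distance to the crisp origin `0̂`. -/
def dpOrigin {m : ℕ} (p : ℝ) (u : Em m → ℝ) : ℝ :=
  (∫ a in Ioc (0:ℝ) 1, hausdorffDist (acut u a) ({0} : Set (Em m)) ^ p) ^ (1/p)

/-- Uniformly p-mean bounded family. -/
def UPMB {m : ℕ} (p : ℝ) (U : Set (Em m → ℝ)) : Prop :=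
  ∃ M : ℝ, ∀ u ∈ U, dpOrigin p u ≤ M

/-- p-mean equi-left-continuous family. -/
def PMELC {m : ℕ} (p : ℝ) (U : Set (Em m → ℝ)) : Prop :=
  ∀ ε > (0:ℝ), ∃ δ > (0:ℝ), ∀ h : ℝ, 0 ≤ h → h < δ → ∀ u ∈ U,
    (∫ a in Ioc h 1, hausdorffDist (acut u a) (acut u (a - h)) ^ p) ^ (1/p) < ε

/-- Truncation `u^{(a)}` of a fuzzy set at level `a`. -/
def ftrunc {m : ℕ} (u : Em m → ℝ) (a : ℝ) : Em m → ℝ :=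
  fun x => if a ≤ u x then u x else 0

/-- The kernel of a fuzzy set: intersection of the kernels of its cuts. -/
def fker {m : ℕ} (u : Em m → ℝ) : Set (Em m) :=
  ⋂ a ∈ Ioc (0:ℝ) 1, kern (acut u a)

/-- The full cut-family of a fuzzy set, with the 0-cut being the support. -/
def cutF {m : ℕ} (u : Em m → ℝ) (a : ℝ) : Set (Em m) :=
  if a = 0 then fsupp u else acut u a

/-- Conditions (i)–(iv) of the representation theorem for `F_B(ℝ^m)^p`. -/
def GoodFamily {m : ℕ} (p : ℝ) (v : ℝ → Set (Em m)) : Prop :=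
  (∀ l ∈ Ioc (0:ℝ) 1, (v l).Nonempty ∧ IsCompact (v l)) ∧
  (∀ l ∈ Ioc (0:ℝ) 1, v l = ⋂ g ∈ Ico (0:ℝ) l, v g) ∧
  (v 0 = closure (⋃ g ∈ Ioc (0:ℝ) 1, v g)) ∧
  IntegrableOn (fun a => hausdorffDist (v a) ({0} : Set (Em m)) ^ p) (Ioc (0:ℝ) 1)



section Aux
open TopologicalSpace

variable {m : ℕ} {p : ℝ} {u w : Em m → ℝ}

lemma acut_antitone (u : Em m → ℝ) : Antitone (acut u) := by
  intro a b hab x hx; exact le_trans hab hx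

lemma acut_nonempty (hu : IsFuzzyBp p u) {a : ℝ} (ha : a ≤ 1) : (acut u a).Nonempty := by
  obtain ⟨x, hx⟩ := hu.normal
  exact ⟨x, by simp [acut, hx, ha]⟩

lemma edist_fin (hu : IsFuzzyBp p u) (hw : IsFuzzyBp p w) {a b : ℝ}
    (ha : a ∈ Ioc (0:ℝ) 1) (hb : b ∈ Ioc (0:ℝ) 1) :
    EMetric.hausdorffEdist (acut u a) (acut w b) ≠ ⊤ :=
  hausdorffEdist_ne_top_of_nonempty_of_bounded (acut_nonempty hu ha.2) (acut_nonempty hw hb.2)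
    (hu.compactCuts a ha).isBounded (hw.compactCuts b hb).isBounded

lemma edist_fin0 (hu : IsFuzzyBp p u) {a : ℝ} (ha : a ∈ Ioc (0:ℝ) 1) :
    EMetric.hausdorffEdist (acut u a) ({0} : Set (Em m)) ≠ ⊤ :=
  hausdorffEdist_ne_top_of_nonempty_of_bounded (acut_nonempty hu ha.2) (singleton_nonempty _)
    (hu.compactCuts a ha).isBounded Bornology.isBounded_singleton

/-- Left-continuity of the cut map along monotone sequences. -/
lemma tendsto_H_acut (hu : IsFuzzyBp p u) {a : ℝ} (ha : a ∈ Ioc (0:ℝ) 1)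
    {b : ℕ → ℝ} (hmono : Monotone b) (hle : ∀ j, b j ≤ a)
    (hlim : Tendsto b atTop (nhds a)) :
    Tendsto (fun j => hausdorffDist (acut u (b j)) (acut u a)) atTop (nhds 0) := by
  obtain ⟨J, hJ⟩ : ∃ J, ∀ j ≥ J, 0 < b j := by
    rcases (eventually_atTop.1 (hlim.eventually (eventually_gt_nhds ha.1))) with ⟨J, hJ⟩
    exact ⟨J, hJ⟩
  have hbIoc : ∀ j ≥ J, b j ∈ Ioc (0:ℝ) 1 := fun j hj => ⟨hJ j hj, le_trans (hle j) ha.2⟩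
  rw [Metric.tendsto_atTop]
  intro ε hε
  by_contra hcon
  push_neg at hcon
  -- frequently, dist (H j) 0 ≥ ε, i.e. H j ≥ ε (H ≥ 0)
  have freq : ∀ N, ∃ j ≥ max N J, ∃ x ∈ acut u (b j), ε/2 ≤ infDist x (acut u a) := by
    intro N
    obtain ⟨j, hjN, hjd⟩ := hcon (max N J)
    refine ⟨j, hjN, ?_⟩
    by_contra hno
    push_neg at hno
    have hle2 : hausdorffDist (acut u (b j)) (acut u a) ≤ ε/2 := by
      apply hausdorffDist_le_of_mem_dist (le_of_lt (by linarith))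
      · intro x hx
        have h1 : infDist x (acut u a) < ε/2 := hno x hx
        obtain ⟨y, hy, hxy⟩ := (infDist_lt_iff (acut_nonempty hu ha.2)).1 h1
        exact ⟨y, hy, hxy.le⟩
      · intro x hx
        exact ⟨x, acut_antitone u (hle j) hx, by rw [dist_self]; linarith⟩
    have : dist (hausdorffDist (acut u (b j)) (acut u a)) 0 ≤ ε/2 := by
      rw [Real.dist_eq, sub_zero, abs_of_nonneg hausdorffDist_nonneg]; exact hle2
    linarith [hjd]
  -- build sequences
  choose jj hjjge xx hxmem hxbd using freq
  have hjjJ : ∀ N, J ≤ jj N := fun N => le_trans (le_max_right _ _) (hjjge N)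
  have hjjN : ∀ N, N ≤ jj N := fun N => le_trans (le_max_left _ _) (hjjge N)
  have hsub : ∀ N, xx N ∈ acut u (b J) :=
    fun N => acut_antitone u (hmono (hjjJ N)) (hxmem N)
  obtain ⟨z, hz, φ, hφ, hzlim⟩ :=
    (hu.compactCuts (b J) (hbIoc J le_rfl)).tendsto_subseq hsub
  have hza : z ∈ acut u a := by
    have hbz : ∀ j0, J ≤ j0 → b j0 ≤ u z := by
      intro j0 hj0
      have hclosed : IsClosed (acut u (b j0)) :=
        (hu.compactCuts (b j0) (hbIoc j0 hj0)).isClosed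
      have hmem : ∀ᶠ N in atTop, (fun N => xx (φ N)) N ∈ acut u (b j0) := by
        filter_upwards [eventually_ge_atTop j0] with N hN
        exact acut_antitone u (hmono (le_trans hN (le_trans (hφ.le_apply) (hjjN (φ N)))))
          (hxmem (φ N))
      exact hclosed.mem_of_tendsto hzlim hmem
    have : a ≤ u z := le_of_tendsto hlim (by filter_upwards [eventually_ge_atTop J] with j hj using hbz j hj)
    exact this
  have hcont : Tendsto (fun N => infDist (xx (φ N)) (acut u a)) atTop
      (nhds (infDist z (acut u a))) :=
    ((continuous_infDist_pt (acut u a)).tendsto z).comp hzlim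
  have hge : ε/2 ≤ infDist z (acut u a) :=
    ge_of_tendsto hcont (Eventually.of_forall fun N => hxbd (φ N))
  have hzero : infDist z (acut u a) = 0 :=
    ((hu.compactCuts a ha).isClosed.mem_iff_infDist_zero (acut_nonempty hu ha.2)).1 hza
  linarith

/-- Cross left-continuity. -/
lemma tendsto_H_cross (hu : IsFuzzyBp p u) (hw : IsFuzzyBp p w) {a : ℝ} (ha : a ∈ Ioc (0:ℝ) 1)
    {b : ℕ → ℝ} (hmono : Monotone b) (hle : ∀ j, b j ≤ a) (hlim : Tendsto b atTop (nhds a)) :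
    Tendsto (fun j => hausdorffDist (acut u (b j)) (acut w (b j))) atTop
      (nhds (hausdorffDist (acut u a) (acut w a))) := by
  rw [tendsto_iff_dist_tendsto_zero]
  apply squeeze_zero' (Eventually.of_forall fun j => dist_nonneg)
    (g := fun j => hausdorffDist (acut u (b j)) (acut u a)
      + hausdorffDist (acut w (b j)) (acut w a))
  · obtain ⟨J, hJ⟩ := eventually_atTop.1 (hlim.eventually (eventually_gt_nhds ha.1))
    filter_upwards [eventually_ge_atTop J] with j hj
    have hbj : b j ∈ Ioc (0:ℝ) 1 := ⟨hJ j hj, le_trans (hle j) ha.2⟩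
    have t1 : hausdorffDist (acut u (b j)) (acut w (b j)) ≤
        hausdorffDist (acut u (b j)) (acut u a) + hausdorffDist (acut w (b j)) (acut w a)
        + hausdorffDist (acut u a) (acut w a) := by
      calc hausdorffDist (acut u (b j)) (acut w (b j))
          ≤ hausdorffDist (acut u (b j)) (acut u a)
            + hausdorffDist (acut u a) (acut w (b j)) :=
            hausdorffDist_triangle (edist_fin hu hu hbj ha)
        _ ≤ hausdorffDist (acut u (b j)) (acut u a)
            + (hausdorffDist (acut u a) (acut w a)
              + hausdorffDist (acut w a) (acut w (b j))) := by
            gcongr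
            exact hausdorffDist_triangle (edist_fin hu hw ha ha)
        _ = _ := by
            rw [show hausdorffDist (acut w a) (acut w (b j))
              = hausdorffDist (acut w (b j)) (acut w a) from hausdorffDist_comm]
            ring
    have t2 : hausdorffDist (acut u a) (acut w a) ≤
        hausdorffDist (acut u (b j)) (acut u a) + hausdorffDist (acut w (b j)) (acut w a)
        + hausdorffDist (acut u (b j)) (acut w (b j)) := by
      calc hausdorffDist (acut u a) (acut w a)
          ≤ hausdorffDist (acut u a) (acut u (b j))
            + hausdorffDist (acut u (b j)) (acut w a) :=
            hausdorffDist_triangle (edist_fin hu hu ha hbj)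
        _ ≤ hausdorffDist (acut u a) (acut u (b j))
            + (hausdorffDist (acut u (b j)) (acut w (b j))
              + hausdorffDist (acut w (b j)) (acut w a)) := by
            gcongr
            exact hausdorffDist_triangle (edist_fin hu hw hbj hbj)
        _ = _ := by
            rw [show hausdorffDist (acut u a) (acut u (b j))
              = hausdorffDist (acut u (b j)) (acut u a) from hausdorffDist_comm]
            ring
    rw [Real.dist_eq, abs_le]
    constructor <;> linarith
  · have h0 : Tendsto (fun j => hausdorffDist (acut u (b j)) (acut u a)) atTop (nhds 0) :=
      tendsto_H_acut hu ha hmono hle hlim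
    have h1 : Tendsto (fun j => hausdorffDist (acut w (b j)) (acut w a)) atTop (nhds 0) :=
      tendsto_H_acut hw ha hmono hle hlim
    simpa using h0.add h1

/-- The dyadic approximation sequence. -/
lemma dyadic_props (a : ℝ) (ha : 0 < a) :
    Monotone (fun j : ℕ => (⌊a * 2^j⌋ : ℝ)/2^j) ∧ (∀ j : ℕ, (⌊a * 2^j⌋ : ℝ)/2^j ≤ a) ∧
    Tendsto (fun j : ℕ => (⌊a * 2^j⌋ : ℝ)/2^j) atTop (nhds a) := by
  have h2 : ∀ j : ℕ, (0:ℝ) < 2^j := fun j => by positivity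
  refine ⟨monotone_nat_of_le_succ fun j => ?_, fun j => ?_, ?_⟩
  · rw [div_le_div_iff₀ (h2 j) (h2 (j+1))]
    have key : (2 * ⌊a * 2^j⌋ : ℤ) ≤ ⌊a * 2^(j+1)⌋ := by
      apply Int.le_floor.2
      push_cast
      nlinarith [Int.floor_le (a * 2^j), pow_succ (2:ℝ) j]
    have keyR : (2:ℝ) * (⌊a * 2^j⌋:ℝ) ≤ (⌊a * 2^(j+1)⌋:ℝ) := by exact_mod_cast key
    calc (⌊a * 2^j⌋:ℝ) * 2^(j+1) = (2 * (⌊a * 2^j⌋:ℝ)) * 2^j := by ring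
      _ ≤ (⌊a * 2^(j+1)⌋:ℝ) * 2^j := mul_le_mul_of_nonneg_right keyR (h2 j).le
  · rw [div_le_iff₀ (h2 j)]
    exact Int.floor_le _
  · have hsq : ∀ j : ℕ, a - 1/2^j ≤ (⌊a * 2^j⌋ : ℝ)/2^j := by
      intro j
      rw [sub_le_iff_le_add, ← add_div, le_div_iff₀ (h2 j)]
      have := Int.lt_floor_add_one (a * 2^j)
      linarith
    have hub : ∀ j : ℕ, (⌊a * 2^j⌋ : ℝ)/2^j ≤ a := fun j => by
      rw [div_le_iff₀ (h2 j)]; exact Int.floor_le _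
    have hl : Tendsto (fun j : ℕ => a - 1/2^j) atTop (nhds a) := by
      have : Tendsto (fun j : ℕ => (1:ℝ)/2^j) atTop (nhds 0) := by
        simpa [one_div] using (tendsto_pow_atTop_nhds_zero_of_lt_one (by norm_num : (0:ℝ) ≤ 2⁻¹)
          (by norm_num : (2:ℝ)⁻¹ < 1)).congr (fun j => by rw [inv_pow])
      simpa using (tendsto_const_nhds (x := a)).sub this
    exact tendsto_of_tendsto_of_tendsto_of_le_of_le hl tendsto_const_nhds hsq hub

/-- a.e.-measurability of cross Hausdorff distances of cut families. -/
lemma aemeas_cross (hu : IsFuzzyBp p u) (hw : IsFuzzyBp p w) :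
    AEMeasurable (fun a => hausdorffDist (acut u a) (acut w a))
      (volume.restrict (Ioc (0:ℝ) 1)) := by
  set F : ℝ → ℝ := fun a => hausdorffDist (acut u a) (acut w a) with hF
  have hFj : ∀ j : ℕ, Measurable (fun a : ℝ => F ((⌊a * 2^j⌋ : ℝ)/2^j)) := by
    intro j
    have : (fun a : ℝ => F ((⌊a * 2^j⌋ : ℝ)/2^j))
        = (fun k : ℤ => F ((k : ℝ)/2^j)) ∘ (fun a : ℝ => ⌊a * 2^j⌋) := rfl
    rw [this]
    exact measurable_from_top.comp (Int.measurable_floor.comp (measurable_id.mul_const _))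
  refine aemeasurable_of_tendsto_metrizable_ae atTop (fun j => (hFj j).aemeasurable) ?_
  rw [ae_restrict_iff' measurableSet_Ioc]
  refine Eventually.of_forall fun a ha => ?_
  obtain ⟨hmono, hle, hlim⟩ := dyadic_props a ha.1
  exact tendsto_H_cross hu hw ha hmono hle hlim

open Classical in
def chiz {m : ℕ} : Em m → ℝ := fun x => if x = 0 then 1 else 0

lemma acut_chiz {m : ℕ} {a : ℝ} (ha : a ∈ Ioc (0:ℝ) 1) :
    acut (chiz : Em m → ℝ) a = ({0} : Set (Em m)) := by
  ext x
  simp only [acut, chiz, mem_setOf_eq, mem_singleton_iff]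
  by_cases hx : x = 0 <;> simp [hx, ha.2]
  · linarith [ha.1]

lemma isFuzzyBp_chiz (hp : 1 ≤ p) : IsFuzzyBp p (chiz : Em m → ℝ) := by
  have hp0 : p ≠ 0 := by linarith
  refine ⟨fun x => ?_, ⟨0, by simp [chiz]⟩, ?_, fun a ha => ?_, ?_⟩
  · by_cases hx : x = 0 <;> simp [chiz, hx]
  · rw [upperSemicontinuous_iff_isOpen_preimage]
    intro y
    by_cases h1 : 1 < y
    · have : (chiz : Em m → ℝ) ⁻¹' Iio y = univ := by
        ext x; by_cases hx : x = 0 <;> simp [chiz, hx] <;> linarith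
      rw [this]; exact isOpen_univ
    · by_cases h0 : 0 < y
      · have : (chiz : Em m → ℝ) ⁻¹' Iio y = {x | x ≠ 0} := by
          ext x; by_cases hx : x = 0 <;> simp [chiz, hx] <;> [skip; exact h0] <;> linarith
        rw [this]
        exact isOpen_ne
      · have : (chiz : Em m → ℝ) ⁻¹' Iio y = ∅ := by
          ext x; by_cases hx : x = 0 <;> simp [chiz, hx] <;> linarith
        rw [this]; exact isOpen_empty
  · rw [acut_chiz ha]; exact isCompact_singleton
  · apply (integrableOn_congr_fun (f := fun _ => (0:ℝ)) ?_ measurableSet_Ioc).1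
    · exact integrableOn_const (by simp)
    · intro a ha
      have h0 : hausdorffDist (acut (chiz : Em m → ℝ) a) ({0} : Set (Em m)) ^ p = 0 := by
        rw [acut_chiz ha, Metric.hausdorffDist_self_zero, Real.zero_rpow hp0]
      simp [h0]

abbrev mu01 : Measure ℝ := (volume : Measure ℝ).restrict (Ioc (0:ℝ) 1)

/-- Hausdorff distance of cuts, as an `ℝ≥0∞`-valued function. -/
def HD {m : ℕ} (u w : Em m → ℝ) : ℝ → ENNReal :=
  fun a => ENNReal.ofReal (hausdorffDist (acut u a) (acut w a))

lemma aemeas_HD (hu : IsFuzzyBp p u) (hw : IsFuzzyBp p w) :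
    AEMeasurable (HD u w) mu01 := (aemeas_cross hu hw).ennreal_ofReal

lemma lint_H0_fin (hp : 1 ≤ p) (hu : IsFuzzyBp p u) :
    ∫⁻ a, (ENNReal.ofReal (hausdorffDist (acut u a) ({0} : Set (Em m))))^p ∂mu01 < ⊤ := by
  have h := hu.lp.lintegral_lt_top
  refine lt_of_eq_of_lt (lintegral_congr fun a => ?_) h
  exact ENNReal.ofReal_rpow_of_nonneg hausdorffDist_nonneg (le_trans zero_le_one hp)

lemma lint_HD_chiz_fin (hp : 1 ≤ p) (hu : IsFuzzyBp p u) :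
    ∫⁻ a, (HD u chiz a)^p ∂mu01 < ⊤ := by
  have h := lint_H0_fin hp hu
  refine lt_of_eq_of_lt ?_ h
  apply lintegral_congr_ae
  filter_upwards [ae_restrict_mem measurableSet_Ioc] with a ha
  simp only [HD, acut_chiz ha]

lemma lint_cross_fin (hp : 1 ≤ p) (hu : IsFuzzyBp p u) (hw : IsFuzzyBp p w) :
    ∫⁻ a, (HD u w a)^p ∂mu01 < ⊤ := by
  have hchi := isFuzzyBp_chiz (m := m) hp
  have hp0 : (0:ℝ) ≤ p := le_trans zero_le_one hp
  set g : ℝ → ENNReal := HD u chiz with hgdef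
  set h : ℝ → ENNReal := HD w chiz with hhdef
  have hg : AEMeasurable g mu01 := aemeas_HD hu hchi
  have hh : AEMeasurable h mu01 := aemeas_HD hw hchi
  have hpt : ∀ᵐ a ∂mu01, HD u w a ≤ (g + h) a := by
    rw [ae_restrict_iff' measurableSet_Ioc]
    refine Eventually.of_forall fun a ha => ?_
    have tri : hausdorffDist (acut u a) (acut w a) ≤
        hausdorffDist (acut u a) (acut chiz a) + hausdorffDist (acut w a) (acut chiz a) := by
      rw [show hausdorffDist (acut w a) (acut chiz a)
        = hausdorffDist (acut chiz a) (acut w a) from hausdorffDist_comm]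
      exact hausdorffDist_triangle (edist_fin hu hchi ha ha)
    calc HD u w a ≤ ENNReal.ofReal (hausdorffDist (acut u a) (acut chiz a)
          + hausdorffDist (acut w a) (acut chiz a)) := ENNReal.ofReal_le_ofReal tri
      _ = (g + h) a := ENNReal.ofReal_add hausdorffDist_nonneg hausdorffDist_nonneg
  have step1 : ∫⁻ a, (HD u w a)^p ∂mu01 ≤ ∫⁻ a, ((g + h) a)^p ∂mu01 :=
    lintegral_mono_ae (hpt.mono fun a ha => ENNReal.rpow_le_rpow ha hp0)
  have mink := ENNReal.lintegral_Lp_add_le hg hh hp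
  have hfin : (∫⁻ a, ((g + h) a)^p ∂mu01) ≠ ⊤ := by
    intro htop
    rw [htop] at mink
    have : (⊤ : ENNReal)^(1/p) = ⊤ := by
      rw [ENNReal.rpow_eq_top_iff]; right
      exact ⟨rfl, by positivity⟩
    rw [this, top_le_iff] at mink
    have h1 : (∫⁻ a, g a ^ p ∂mu01)^(1/p) ≠ ⊤ :=
      (ENNReal.rpow_lt_top_of_nonneg (by positivity) (lint_HD_chiz_fin hp hu).ne).ne
    have h2 : (∫⁻ a, h a ^ p ∂mu01)^(1/p) ≠ ⊤ :=
      (ENNReal.rpow_lt_top_of_nonneg (by positivity) (lint_HD_chiz_fin hp hw).ne).ne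
    exact (ENNReal.add_ne_top.2 ⟨h1, h2⟩) mink
  exact lt_of_le_of_lt step1 (lt_top_iff_ne_top.2 hfin)

lemma dp_eq_lint (hp : 1 ≤ p) (hu : IsFuzzyBp p u) (hw : IsFuzzyBp p w) :
    dp p u w = ((∫⁻ a, (HD u w a)^p ∂mu01)^(1/p)).toReal := by
  have hp0 : (0:ℝ) ≤ p := le_trans zero_le_one hp
  have hmeas : AEStronglyMeasurable (fun a => hausdorffDist (acut u a) (acut w a) ^ p) mu01 :=
    ((aemeas_cross hu hw).pow_const p).aestronglyMeasurable
  have hnn : 0 ≤ᵐ[mu01] fun a => hausdorffDist (acut u a) (acut w a) ^ p :=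
    Eventually.of_forall fun a => Real.rpow_nonneg hausdorffDist_nonneg p
  have hcong : ∫⁻ a, (HD u w a)^p ∂mu01
      = ∫⁻ a, ENNReal.ofReal (hausdorffDist (acut u a) (acut w a) ^ p) ∂mu01 :=
    lintegral_congr fun a => ENNReal.ofReal_rpow_of_nonneg hausdorffDist_nonneg hp0
  rw [dp, integral_eq_lintegral_of_nonneg_ae hnn hmeas, hcong, ENNReal.toReal_rpow]

lemma lint_le_of_dp_lt (hp : 1 ≤
 p) (hu : IsFuzzyBp p u) (hw : IsFuzzyBp p w) {c : ℝ} (hc : 0 < c)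
    (hlt : dp p u w < c) : ∫⁻ a, (HD u w a)^p ∂mu01 ≤ ENNReal.ofReal (c^p) := by
  have hp0 : (0:ℝ) < p := lt_of_lt_of_le one_pos hp
  set L := ∫⁻ a, (HD u w a)^p ∂mu01 with hL
  have hfin : L ≠ ⊤ := (lint_cross_fin hp hu hw).ne
  have h1 : L^(1/p) ≠ ⊤ := (ENNReal.rpow_lt_top_of_nonneg (by positivity) hfin).ne
  have h2 : L^(1/p) < ENNReal.ofReal c := by
    rw [ENNReal.lt_ofReal_iff_toReal_lt h1]
    rw [dp_eq_lint hp hu hw] at hlt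
    exact hlt
  have h3 : (L^(1/p))^p ≤ (ENNReal.ofReal c)^p := ENNReal.rpow_le_rpow h2.le hp0.le
  rw [← ENNReal.rpow_mul, one_div_mul_cancel hp0.ne', ENNReal.rpow_one] at h3
  rwa [ENNReal.ofReal_rpow_of_nonneg hc.le hp0.le] at h3

lemma dp_le_of_lint_le (hp : 1 ≤ p) (hu : IsFuzzyBp p u) (hw : IsFuzzyBp p w) {c : ℝ}
    (hc : 0 ≤ c) (hle : ∫⁻ a, (HD u w a)^p ∂mu01 ≤ ENNReal.ofReal (c^p)) :
    dp p u w ≤ c := by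
  have hp0 : (0:ℝ) < p := lt_of_lt_of_le one_pos hp
  rw [dp_eq_lint hp hu hw]
  apply ENNReal.toReal_le_of_le_ofReal hc
  calc (∫⁻ a, (HD u w a)^p ∂mu01)^(1/p) ≤ (ENNReal.ofReal (c^p))^(1/p) :=
        ENNReal.rpow_le_rpow hle (by positivity)
    _ = ENNReal.ofReal ((c^p)^(1/p)) :=
        ENNReal.ofReal_rpow_of_nonneg (Real.rpow_nonneg hc p) (by positivity)
    _ = ENNReal.ofReal c := by
        rw [← Real.rpow_mul hc, mul_one_div_cancel hp0.ne', Real.rpow_one]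

open Classical in
def NC {m : ℕ} (w : Em m → ℝ) (a : ℝ) : NonemptyCompacts (Em m) :=
  if h : IsCompact (acut w a) ∧ (acut w a).Nonempty then ⟨⟨acut w a, h.1⟩, h.2⟩
  else ⟨⟨{0}, isCompact_singleton⟩, singleton_nonempty 0⟩

lemma NC_coe (hw : IsFuzzyBp p w) {a : ℝ} (ha : a ∈ Ioc (0:ℝ) 1) :
    (NC w a : Set (Em m)) = acut w a := by
  rw [NC, dif_pos ⟨hw.compactCuts a ha, acut_nonempty hw ha.2⟩]
  rfl


lemma exists_fast_subseq {u : ℕ → Em m → ℝ}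
    (hcauchy : ∀ ε > (0:ℝ), ∃ N : ℕ, ∀ j ≥ N, ∀ k ≥ N, dp p (u j) (u k) < ε) :
    ∃ n : ℕ → ℕ, StrictMono n ∧ ∀ k, dp p (u (n k)) (u (n (k+1))) < (1/2:ℝ)^k := by
  have hpos : ∀ k : ℕ, (0:ℝ) < (1/2)^k := fun k => by positivity
  choose N hN using fun k : ℕ => hcauchy ((1/2)^k) (hpos k)
  let n : ℕ → ℕ := fun k => Nat.rec (N 0) (fun k ih => max (N (k+1)) (ih + 1)) k
  have hsucc : ∀ k, n (k+1) = max (N (k+1)) (n k + 1) := fun k => rfl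
  have hmono : StrictMono n := strictMono_nat_of_lt_succ fun k => by
    rw [hsucc]; exact lt_of_lt_of_le (Nat.lt_succ_self _) (le_max_right _ _)
  have hge : ∀ k, N k ≤ n k := by
    intro k; cases k with
    | zero => exact le_refl _
    | succ k => rw [hsucc]; exact le_max_left _ _
  exact ⟨n, hmono, fun k =>
    hN k (n k) (hge k) (n (k+1)) (le_trans (hge k) (hmono (Nat.lt_succ_self k)).le)⟩

section Main
variable (hp : 1 ≤ p) {u : ℕ → Em m → ℝ} (hu : ∀ n, IsFuzzyBp p (u n))
  {n : ℕ → ℕ} (hn : StrictMono n)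
  (hfast : ∀ k, dp p (u (n k)) (u (n (k+1))) < (1/2:ℝ)^k)

include hp hu hfast in
lemma ae_summable_dist :
    ∀ᵐ a ∂mu01, a ∈ Ioc (0:ℝ) 1 ∧
      Summable (fun k => dist (NC (u (n k)) a) (NC (u (n (k+1))) a)) := by
  have hp0 : (0:ℝ) < p := lt_of_lt_of_le one_pos hp
  set D : ℕ → ℝ → ENNReal := fun k => HD (u (n k)) (u (n (k+1))) with hD
  have hDm : ∀ k, AEMeasurable (D k) mu01 := fun k => aemeas_HD (hu (n k)) (hu (n (k+1)))
  have hDbd : ∀ k, (∫⁻ a, (D k a)^p ∂mu01)^(1/p) ≤ ENNReal.ofReal ((1/2)^k) := by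
    intro k
    have h1 := lint_le_of_dp_lt hp (hu (n k)) (hu (n (k+1))) (by positivity) (hfast k)
    calc (∫⁻ a, (D k a)^p ∂mu01)^(1/p) ≤ (ENNReal.ofReal (((1/2:ℝ)^k)^p))^(1/p) :=
          ENNReal.rpow_le_rpow h1 (by positivity)
      _ = ENNReal.ofReal ((((1/2:ℝ)^k)^p)^(1/p)) :=
          ENNReal.ofReal_rpow_of_nonneg (Real.rpow_nonneg (by positivity) p) (by positivity)
      _ = ENNReal.ofReal ((1/2:ℝ)^k) := by
          rw [← Real.rpow_mul (by positivity), mul_one_div_cancel hp0.ne', Real.rpow_one]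
  set S : ℕ → ℝ → ENNReal := fun K a => ∑ k ∈ Finset.range K, D k a with hS
  have hSm : ∀ K, AEMeasurable (S K) mu01 := fun K => Finset.aemeasurable_fun_sum _ fun k _ => hDm k
  have hSbd : ∀ K, (∫⁻ a, (S K a)^p ∂mu01)^(1/p)
      ≤ ∑ k ∈ Finset.range K, (∫⁻ a, (D k a)^p ∂mu01)^(1/p) := by
    intro K
    induction K with
    | zero =>
        simp only [Finset.range_zero, Finset.sum_empty]
        have : ∀ a : ℝ, (S 0 a)^p = 0 := fun a => by
          simp [hS, ENNReal.zero_rpow_of_pos hp0]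
        rw [lintegral_congr this, lintegral_zero, ENNReal.zero_rpow_of_pos (by positivity)]
    | succ K ih =>
        have hstep : (fun a => S (K+1) a) = (fun a => S K a + D K a) := by
          funext a; simp [hS, Finset.sum_range_succ]
        calc (∫⁻ a, (S (K+1) a)^p ∂mu01)^(1/p)
            = (∫⁻ a, ((S K + D K) a)^p ∂mu01)^(1/p) := by
              congr 1; apply lintegral_congr fun a => by
                rw [show S (K+1) a = (S K + D K) a from congrFun hstep a]
          _ ≤ (∫⁻ a, (S K a)^p ∂mu01)^(1/p) + (∫⁻ a, (D K a)^p ∂mu01)^(1/p) :=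
              ENNReal.lintegral_Lp_add_le (hSm K) (hDm K) hp
          _ ≤ _ := by
              rw [Finset.sum_range_succ]
              exact add_le_add_left ih _
  have hSbd2 : ∀ K, ∫⁻ a, (S K a)^p ∂mu01 ≤ (ENNReal.ofReal 2)^p := by
    intro K
    have h2 : (∫⁻ a, (S K a)^p ∂mu01)^(1/p) ≤ ENNReal.ofReal 2 := by
      calc (∫⁻ a, (S K a)^p ∂mu01)^(1/p)
          ≤ ∑ k ∈ Finset.range K, (∫⁻ a, (D k a)^p ∂mu01)^(1/p) := hSbd K
        _ ≤ ∑ k ∈ Finset.range K, ENNReal.ofReal ((1/2)^k) :=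
            Finset.sum_le_sum fun k _ => hDbd k
        _ = ENNReal.ofReal (∑ k ∈ Finset.range K, (1/2:ℝ)^k) :=
            (ENNReal.ofReal_sum_of_nonneg (fun k _ => by positivity)).symm
        _ ≤ ENNReal.ofReal 2 := ENNReal.ofReal_le_ofReal (sum_geometric_two_le K)
    calc ∫⁻ a, (S K a)^p ∂mu01
        = ((∫⁻ a, (S K a)^p ∂mu01)^(1/p))^p := by
          rw [← ENNReal.rpow_mul, one_div_mul_cancel hp0.ne', ENNReal.rpow_one]
      _ ≤ (ENNReal.ofReal 2)^p := ENNReal.rpow_le_rpow h2 hp0.le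
  set T : ℝ → ENNReal := fun a => ∑' k, D k a with hT
  have hTm : AEMeasurable T mu01 := AEMeasurable.ennreal_tsum hDm
  have hTsup : ∀ a, (T a)^p = ⨆ K, (S K a)^p := by
    intro a
    have hmono : Monotone (fun K => (S K a)^p) := fun i j hij =>
      ENNReal.rpow_le_rpow (Finset.sum_le_sum_of_subset (Finset.range_subset_range.2 hij)) hp0.le
    have htend : Tendsto (fun K => (S K a)^p) atTop (nhds ((T a)^p)) := by
      have h1 : Tendsto (fun K => S K a) atTop (nhds (T a)) := ENNReal.tendsto_nat_tsum _
      exact (ENNReal.continuous_rpow_const.tendsto (T a)).comp h1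
    exact (iSup_eq_of_tendsto hmono htend).symm
  have hTfin : ∫⁻ a, (T a)^p ∂mu01 ≤ (ENNReal.ofReal 2)^p := by
    rw [lintegral_congr hTsup, lintegral_iSup' (fun K => (hSm K).pow_const p)
      (Eventually.of_forall fun a i j hij =>
        ENNReal.rpow_le_rpow (Finset.sum_le_sum_of_subset (Finset.range_subset_range.2 hij)) hp0.le)]
    exact iSup_le hSbd2
  have hae : ∀ᵐ a ∂mu01, (T a)^p < ⊤ :=
    ae_lt_top' (hTm.pow_const p) (lt_of_le_of_lt hTfin
      (ENNReal.rpow_lt_top_of_nonneg hp0.le ENNReal.ofReal_ne_top)).ne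
  filter_upwards [hae, ae_restrict_mem measurableSet_Ioc] with a hTa ha
  refine ⟨ha, ?_⟩
  have hTfin' : T a ≠ ⊤ := by
    intro htop
    rw [htop, ENNReal.top_rpow_of_pos hp0] at hTa
    exact (lt_irrefl _ hTa)
  have hdist : ∀ k, D k a = (nndist (NC (u (n k)) a) (NC (u (n (k+1))) a) : ENNReal) := by
    intro k
    rw [hD]
    simp only [HD]
    rw [← NC_coe (hu (n k)) ha, ← NC_coe (hu (n (k+1))) ha,
      ← Metric.NonemptyCompacts.dist_eq, dist_nndist, ENNReal.ofReal_coe_nnreal]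
  have h1 : (∑' k, ((nndist (NC (u (n k)) a) (NC (u (n (k+1))) a) : NNReal) : ENNReal)) ≠ ⊤ := by
    rw [show (∑' k, ((nndist (NC (u (n k)) a) (NC (u (n (k+1))) a) : NNReal) : ENNReal)) = T a
      from (tsum_congr fun k => (hdist k).symm)]
    exact hTfin'
  have h2 := ENNReal.tsum_coe_ne_top_iff_summable.1 h1
  have h3 := NNReal.summable_coe.2 h2
  refine h3.congr fun k => ?_
  rw [dist_nndist]
end Main

def seqNC {m : ℕ} (u : ℕ → Em m → ℝ) (n : ℕ → ℕ) (a : ℝ) : ℕ → NonemptyCompacts (Em m) :=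
  fun k => NC (u (n k)) a

open Classical in
def Klim {m : ℕ} (u : ℕ → Em m → ℝ) (n : ℕ → ℕ) (a : ℝ) : NonemptyCompacts (Em m) :=
  if h : ∃ L, Tendsto (seqNC u n a) atTop (nhds L) then h.choose
  else ⟨⟨{0}, isCompact_singleton⟩, singleton_nonempty 0⟩

def GoodSet {m : ℕ} (u : ℕ → Em m → ℝ) (n : ℕ → ℕ) : Set ℝ :=
  {a | a ∈ Ioc (0:ℝ) 1 ∧ ∃ L, Tendsto (seqNC u n a) atTop (nhds L)}

def vlim {m : ℕ} (u : ℕ → Em m → ℝ) (n : ℕ → ℕ) : Em m → ℝ :=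
  fun x => sSup ({0} ∪ {a | a ∈ GoodSet u n ∧ x ∈ (Klim u n a : Set (Em m))})

lemma Klim_spec {u : ℕ → Em m → ℝ} {n : ℕ → ℕ} {a : ℝ} (ha : a ∈ GoodSet u n) :
    Tendsto (seqNC u n a) atTop (nhds (Klim u n a)) := by
  rw [Klim, dif_pos ha.2]
  exact ha.2.choose_spec

lemma NCfin (X Y : NonemptyCompacts (Em m)) :
    EMetric.hausdorffEdist (X : Set (Em m)) (Y : Set (Em m)) ≠ ⊤ :=
  hausdorffEdist_ne_top_of_nonempty_of_bounded X.nonempty Y.nonempty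
    X.isCompact.isBounded Y.isCompact.isBounded

section Main
variable (hp : 1 ≤ p) {u : ℕ → Em m → ℝ} (hu : ∀ n, IsFuzzyBp p (u n))
  {n : ℕ → ℕ} (hn : StrictMono n)
  (hfast : ∀ k, dp p (u (n k)) (u (n (k+1))) < (1/2:ℝ)^k)

include hp hu hfast in
lemma ae_goodSet : ∀ᵐ a ∂mu01, a ∈ GoodSet u n := by
  filter_upwards [ae_summable_dist hp hu hfast] with a ⟨ha, hsum⟩
  exact ⟨ha, cauchySeq_tendsto_of_complete (cauchySeq_of_summable_dist hsum)⟩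

include hu in
lemma Klim_antitone {a b : ℝ} (ha : a ∈ GoodSet u n) (hb : b ∈ GoodSet u n) (hab : a ≤ b) :
    (Klim u n b : Set (Em m)) ⊆ (Klim u n a : Set (Em m)) := by
  intro x hx
  have hsub : ∀ k, (NC (u (n k)) b : Set (Em m)) ⊆ (NC (u (n k)) a : Set (Em m)) := by
    intro k
    rw [NC_coe (hu (n k)) ha.1, NC_coe (hu (n k)) hb.1]
    exact acut_antitone _ hab
  have key : ∀ k, infDist x (Klim u n a : Set (Em m)) ≤
      dist (seqNC u n b k) (Klim u n b) + dist (seqNC u n a k) (Klim u n a) := by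
    intro k
    have e1 : infDist x (seqNC u n b k : Set (Em m)) ≤
        infDist x (Klim u n b : Set (Em m)) + hausdorffDist (Klim u n b : Set (Em m))
          (seqNC u n b k : Set (Em m)) :=
      infDist_le_infDist_add_hausdorffDist (NCfin _ _)
    have e2 : infDist x (Klim u n b : Set (Em m)) = 0 :=
      ((Klim u n b).isCompact.isClosed.mem_iff_infDist_zero (Klim u n b).nonempty).1 hx
    have e3 : infDist x (seqNC u n a k : Set (Em m)) ≤ infDist x (seqNC u n b k : Set (Em m)) :=
      infDist_le_infDist_of_subset (hsub k) (seqNC u n b k).nonempty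
    have e4 : infDist x (Klim u n a : Set (Em m)) ≤
        infDist x (seqNC u n a k : Set (Em m)) + hausdorffDist (seqNC u n a k : Set (Em m))
          (Klim u n a : Set (Em m)) :=
      infDist_le_infDist_add_hausdorffDist (NCfin _ _)
    have e5 : hausdorffDist (Klim u n b : Set (Em m)) (seqNC u n b k : Set (Em m))
        = dist (seqNC u n b k) (Klim u n b) := by
      rw [Metric.NonemptyCompacts.dist_eq, hausdorffDist_comm]
    have e6 : hausdorffDist (seqNC u n a k : Set (Em m)) (Klim u n a : Set (Em m))
        = dist (seqNC u n a k) (Klim u n a) := by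
      rw [Metric.NonemptyCompacts.dist_eq]
    linarith
  have hlim : Tendsto (fun k => dist (seqNC u n b k) (Klim u n b)
      + dist (seqNC u n a k) (Klim u n a)) atTop (nhds 0) := by
    have l1 := tendsto_iff_dist_tendsto_zero.1 (Klim_spec hb)
    have l2 := tendsto_iff_dist_tendsto_zero.1 (Klim_spec ha)
    simpa using l1.add l2
  have hinf : infDist x (Klim u n a : Set (Em m)) ≤ 0 :=
    ge_of_tendsto hlim (Eventually.of_forall key)
  have : infDist x (Klim u n a : Set (Em m)) = 0 := le_antisymm hinf infDist_nonneg
  exact ((Klim u n a).isCompact.isClosed.mem_iff_infDist_zero (Klim u n a).nonempty).2 this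

include hp hu hfast in
lemma good_dense {t : ℝ} (ht : t ∈ Ioc (0:ℝ) 1) {ε : ℝ} (hε : 0 < ε) :
    ∃ b ∈ GoodSet u n, t - ε < b ∧ b < t := by
  by_contra hcon
  push_neg at hcon
  set l := max (t - ε) (t/2) with hl
  have hlt : l < t := by
    rw [hl, max_lt_iff]
    constructor <;> linarith [ht.1]
  have hsub : Ioo l t ⊆ (GoodSet u n)ᶜ := by
    intro b hb
    intro hbg
    have h1 : t - ε < b := lt_of_le_of_lt (le_max_left _ _) hb.1
    exact absurd hb.2 (not_lt.2 (hcon b hbg h1))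
  have hae := ae_goodSet hp hu hfast (n := n)
  have h0 : mu01 ((GoodSet u n)ᶜ) = 0 := by
    rw [ae_iff] at hae
    exact hae
  have h1 : mu01 (Ioo l t) = 0 := measure_mono_null hsub h0
  have hsub2 : Ioo l t ⊆ Ioc (0:ℝ) 1 := by
    intro b hb
    constructor
    · exact lt_of_lt_of_le (lt_of_lt_of_le (by linarith [ht.1] : (0:ℝ) < t/2) (le_max_right _ _)) hb.1.le
    · exact le_trans hb.2.le ht.2
  have h2 : mu01 (Ioo l t) = volume (Ioo l t) := by
    rw [Measure.restrict_apply measurableSet_Ioo, inter_eq_self_of_subset_left hsub2]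
  rw [h2, Real.volume_Ioo] at h1
  have : (0:ℝ) < t - l := by linarith
  simp only [ENNReal.ofReal_eq_zero] at h1
  linarith

include hp hu hfast in
lemma vlim_char {t : ℝ} (ht : t ∈ Ioc (0:ℝ) 1) (x : Em m) :
    t ≤ vlim u n x ↔ ∀ b ∈ GoodSet u n, b < t → x ∈ (Klim u n b : Set (Em m)) := by
  set S : Set ℝ := {0} ∪ {a | a ∈ GoodSet u n ∧ x ∈ (Klim u n a : Set (Em m))} with hS
  have hne : S.Nonempty := ⟨0, Or.inl rfl⟩
  have hbdd : BddAbove S := by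
    refine ⟨1, fun y hy => ?_⟩
    rcases hy with hy | hy
    · rw [hy]; norm_num
    · exact hy.1.1.2
  constructor
  · intro hvt b hb hbt
    have hlt : b < sSup S := lt_of_lt_of_le hbt hvt
    obtain ⟨c, hc, hbc⟩ := exists_lt_of_lt_csSup hne hlt
    rcases hc with hc | hc
    · simp only [mem_singleton_iff] at hc
      exfalso; rw [hc] at hbc; exact absurd hb.1.1 (not_lt.2 hbc.le)
    · exact Klim_antitone hu hb hc.1 hbc.le hc.2
  · intro hx
    by_contra hcon
    push_neg at hcon
    have hε : (0:ℝ) < t - vlim u n x := by linarith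
    obtain ⟨b, hbg, hb1, hb2⟩ := good_dense hp hu hfast ht hε
    have hbS : b ∈ S := Or.inr ⟨hbg, hx b hbg hb2⟩
    have : b ≤ vlim u n x := le_csSup hbdd hbS
    have : t - (t - vlim u n x) < b := hb1
    linarith

include hp hu hfast in
lemma vlim_acut_eq_iInter {t : ℝ} (ht : t ∈ Ioc (0:ℝ) 1) :
    acut (vlim u n) t
      = ⋂ (b : {b : ℝ // b ∈ GoodSet u n ∧ b < t}), (Klim u n b.1 : Set (Em m)) := by
  ext x
  rw [mem_iInter]
  constructor
  · intro hx b
    exact (vlim_char hp hu hfast ht x).1 hx b.1 b.2.1 b.2.2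
  · intro hx
    exact (vlim_char hp hu hfast ht x).2 fun b hb hbt => hx ⟨b, hb, hbt⟩

include hp hu hfast in
lemma good_index_nonempty {t : ℝ} (ht : t ∈ Ioc (0:ℝ) 1) :
    Nonempty {b : ℝ // b ∈ GoodSet u n ∧ b < t} := by
  obtain ⟨b, hbg, _, hb2⟩ := good_dense hp hu hfast ht ht.1
  exact ⟨⟨b, hbg, hb2⟩⟩

include hp hu hfast in
lemma vlim_cut_compact_nonempty {t : ℝ} (ht : t ∈ Ioc (0:ℝ) 1) :
    IsCompact (acut (vlim u n) t) ∧ (acut (vlim u n) t).Nonempty := by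
  have hne := good_index_nonempty hp hu hfast (n := n) ht
  have hdir : Directed (fun (x1 x2 : Set (Em m)) => x1 ⊇ x2)
      (fun b : {b : ℝ // b ∈ GoodSet u n ∧ b < t} => (Klim u n b.1 : Set (Em m))) := by
    intro i j
    rcases le_total i.1 j.1 with h | h
    · exact ⟨j, Klim_antitone hu i.2.1 j.2.1 h, subset_rfl⟩
    · exact ⟨i, subset_rfl, Klim_antitone hu j.2.1 i.2.1 h⟩
  rw [vlim_acut_eq_iInter hp hu hfast ht]
  constructor
  · obtain ⟨i0⟩ := hne
    exact IsCompact.of_isClosed_subset (Klim u n i0.1).isCompact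
      (isClosed_iInter fun i => (Klim u n i.1).isCompact.isClosed) (iInter_subset _ i0)
  · exact IsCompact.nonempty_iInter_of_directed_nonempty_isCompact_isClosed _ hdir
      (fun i => (Klim u n i.1).nonempty) (fun i => (Klim u n i.1).isCompact)
      (fun i => (Klim u n i.1).isCompact.isClosed)

lemma vlim_mem01 (x : Em m) : vlim u n x ∈ Icc (0:ℝ) 1 := by
  have hbdd : BddAbove ({0} ∪ {a | a ∈ GoodSet u n ∧ x ∈ (Klim u n a : Set (Em m))}) := by
    refine ⟨1, fun y hy => ?_⟩
    rcases hy with hy | hy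
    · rw [hy]; norm_num
    · exact hy.1.1.2
  constructor
  · exact le_csSup hbdd (Or.inl rfl)
  · show sSup _ ≤ (1:ℝ)
    refine csSup_le ⟨0, Or.inl rfl⟩ fun y hy => ?_
    rcases hy with hy | hy
    · simp only [mem_singleton_iff] at hy; rw [hy]; norm_num
    · exact hy.1.1.2

include hp hu hfast in
lemma vlim_normal : ∃ x, vlim u n x = 1 := by
  obtain ⟨x, hx⟩ := (vlim_cut_compact_nonempty hp hu hfast (n := n)
    (right_mem_Ioc.2 one_pos)).2
  exact ⟨x, le_antisymm (vlim_mem01 x).2 hx⟩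

include hp hu hfast in
lemma vlim_usc : UpperSemicontinuous (vlim u n) := by
  rw [upperSemicontinuous_iff_isOpen_preimage]
  intro y
  rcases le_or_gt y 0 with h0 | h0
  · have : vlim u n ⁻¹' Iio y = ∅ := by
      ext x
      simp only [mem_preimage, mem_Iio, mem_empty_iff_false, iff_false, not_lt]
      exact le_trans h0 (vlim_mem01 x).1
    rw [this]; exact isOpen_empty
  · rcases le_or_gt y 1 with h1 | h1
    · have : vlim u n ⁻¹' Iio y = (acut (vlim u n) y)ᶜ := by
        ext x
        simp only [mem_preimage, mem_Iio, mem_compl_iff, acut, mem_setOf_eq, not_le]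
      rw [this]
      exact (vlim_cut_compact_nonempty hp hu hfast ⟨h0, h1⟩).1.isClosed.isOpen_compl
    · have : vlim u n ⁻¹' Iio y = univ := by
        ext x
        simp only [mem_preimage, mem_Iio, mem_univ, iff_true]
        exact lt_of_le_of_lt (vlim_mem01 x).2 h1
      rw [this]; exact isOpen_univ

include hu in
lemma countable_bad (x0 : Em m) :
    Set.Countable {a | a ∈ GoodSet u n ∧ ∃ ε > (0:ℝ), ∀ b ∈ GoodSet u n, b < a →
      infDist x0 (Klim u n b : Set (Em m)) ≤ infDist x0 (Klim u n a : Set (Em m)) - ε} := by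
  set g : ℝ → ℝ := fun a => infDist x0 (Klim u n a : Set (Em m)) with hg
  set Bad : Set ℝ := {a | a ∈ GoodSet u n ∧ ∃ ε > (0:ℝ), ∀ b ∈ GoodSet u n, b < a →
      g b ≤ g a - ε} with hBad
  have key : ∀ a ∈ Bad, ∃ q : ℚ, (∀ b ∈ GoodSet u n, b < a → g b < (q:ℝ)) ∧ (q:ℝ) < g a := by
    rintro a ⟨hag, ε, hε, hba⟩
    obtain ⟨q, hq1, hq2⟩ := exists_rat_btwn (show g a - ε < g a by linarith)
    exact ⟨q, fun b hb hba' => lt_of_le_of_lt (hba b hb hba') hq1, hq2⟩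
  choose! q hq1 hq2 using key
  rw [Set.countable_iff_exists_injOn]
  refine ⟨fun a => Encodable.encode (q a), fun a ha a' ha' heq => ?_⟩
  have hqq : q a = q a' := Encodable.encode_injective heq
  by_contra hne
  rcases lt_or_gt_of_ne hne with hlt | hlt
  · have h1 : (q a' : ℝ) < g a' := hq2 a' ha'
    have h2 : g a < (q a' : ℝ) := hq1 a' ha' a ha.1 hlt
    have h3 : (q a : ℝ) < g a := hq2 a ha
    rw [hqq] at h3
    linarith
  · have h2 : g a' < (q a : ℝ) := hq1 a ha a' ha'.1 hlt
    have h3 : (q a' : ℝ) < g a' := hq2 a' ha'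
    rw [← hqq] at h3
    linarith

include hp hu hfast in
lemma ae_vcut_eq : ∀ᵐ a ∂mu01, a ∈ Ioc (0:ℝ) 1 ∧ a ∈ GoodSet u n ∧
    acut (vlim u n) a = (Klim u n a : Set (Em m)) := by
  obtain ⟨xs, hxs⟩ := exists_dense_seq (Em m)
  set Bad : ℕ → Set ℝ := fun i => {a | a ∈ GoodSet u n ∧ ∃ ε > (0:ℝ), ∀ b ∈ GoodSet u n, b < a →
      infDist (xs i) (Klim u n b : Set (Em m)) ≤ infDist (xs i) (Klim u n a : Set (Em m)) - ε}
    with hBadDef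
  have hnull : mu01 (⋃ i, Bad i) = 0 :=
    measure_iUnion_null fun i => ((countable_bad hu (n := n) (xs i)).measure_zero _)
  have hae3 : ∀ᵐ a ∂mu01, a ∉ ⋃ i, Bad i := by
    rw [ae_iff]
    have heq : {a : ℝ | ¬ a ∉ ⋃ i, Bad i} = ⋃ i, Bad i := by ext a; simp
    rw [heq]
    exact hnull
  filter_upwards [ae_restrict_mem measurableSet_Ioc, ae_goodSet hp hu hfast (n := n), hae3]
    with a ha hgood hnbad
  refine ⟨ha, hgood, ?_⟩
  apply Subset.antisymm
  · intro x hx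
    have hx' : ∀ b ∈ GoodSet u n, b < a → x ∈ (Klim u n b : Set (Em m)) :=
      (vlim_char hp hu hfast ha x).1 hx
    have hgi : ∀ i, infDist (xs i) (Klim u n a : Set (Em m)) ≤ dist (xs i) x := by
      intro i
      by_contra hlt
      push_neg at hlt
      have hnb : a ∉ Bad i := fun hmem => hnbad (mem_iUnion.2 ⟨i, hmem⟩)
      rw [hBadDef] at hnb
      simp only [mem_setOf_eq, not_and, not_exists] at hnb
      have hnb2 := hnb hgood
      set ε := infDist (xs i) (Klim u n a : Set (Em m)) - dist (xs i) x with hε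
      have hεpos : 0 < ε := by rw [hε]; linarith
      have := hnb2 ε
      push_neg at this
      obtain ⟨b, hbg, hba, hgb⟩ := this hεpos
      have hxb : x ∈ (Klim u n b : Set (Em m)) := hx' b hbg hba
      have : infDist (xs i) (Klim u n b : Set (Em m)) ≤ dist (xs i) x := infDist_le_dist_of_mem hxb
      rw [hε] at hgb
      linarith
    have hzero : infDist x (Klim u n a : Set (Em m)) = 0 := by
      have hle : ∀ δ > (0:ℝ), infDist x (Klim u n a : Set (Em m)) ≤ 2*δ := by
        intro δ hδ
        obtain ⟨i, hi⟩ := hxs.exists_dist_lt x hδ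
        have t1 : infDist x (Klim u n a : Set (Em m)) ≤
            infDist (xs i) (Klim u n a : Set (Em m)) + dist x (xs i) :=
          infDist_le_infDist_add_dist
        have t2 : dist (xs i) x < δ := by rw [dist_comm]; exact hi
        have t3 := hgi i
        rw [dist_comm x (xs i)] at t1
        linarith
      by_contra hne
      have hpos : 0 < infDist x (Klim u n a : Set (Em m)) :=
        lt_of_le_of_ne infDist_nonneg (Ne.symm hne)
      have := hle (infDist x (Klim u n a : Set (Em m))/4) (by linarith)
      linarith
    exact ((Klim u n a).isCompact.isClosed.mem_iff_infDist_zero (Klim u n a).nonempty).2 hzero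
  · intro x hx
    exact (vlim_char hp hu hfast ha x).2
      (fun b hb hba => Klim_antitone hu hb hgood hba.le hx)

end Main

lemma H_tendsto_of_NC_tendsto {A : ℕ → NonemptyCompacts (Em m)} {L : NonemptyCompacts (Em m)}
    (hA : Tendsto A atTop (nhds L)) {S : Set (Em m)} (hS : S.Nonempty)
    (hSb : Bornology.IsBounded S) :
    Tendsto (fun k => hausdorffDist (A k : Set (Em m)) S) atTop
      (nhds (hausdorffDist (L : Set (Em m)) S)) := by
  rw [tendsto_iff_dist_tendsto_zero]
  apply squeeze_zero' (Eventually.of_forall fun k => dist_nonneg) (g := fun k => dist (A k) L)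
  · refine Eventually.of_forall fun k => ?_
    have fin1 : EMetric.hausdorffEdist (A k : Set (Em m)) (L : Set (Em m)) ≠ ⊤ := NCfin _ _
    have fin2 : EMetric.hausdorffEdist (L : Set (Em m)) S ≠ ⊤ :=
      hausdorffEdist_ne_top_of_nonempty_of_bounded L.nonempty hS L.isCompact.isBounded hSb
    have t1 : hausdorffDist (A k : Set (Em m)) S ≤
        hausdorffDist (A k : Set (Em m)) (L : Set (Em m)) + hausdorffDist (L : Set (Em m)) S :=
      hausdorffDist_triangle fin1
    have t2 : hausdorffDist (L : Set (Em m)) S ≤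
        hausdorffDist (L : Set (Em m)) (A k : Set (Em m)) + hausdorffDist (A k : Set (Em m)) S :=
      hausdorffDist_triangle (by rw [EMetric.hausdorffEdist_comm]; exact fin1)
    have hcomm : hausdorffDist (L : Set (Em m)) (A k : Set (Em m))
        = hausdorffDist (A k : Set (Em m)) (L : Set (Em m)) := hausdorffDist_comm
    have hdd : dist (A k) L = hausdorffDist (A k : Set (Em m)) (L : Set (Em m)) :=
      Metric.NonemptyCompacts.dist_eq
    rw [Real.dist_eq, abs_le, hdd]
    constructor <;> linarith
  · exact tendsto_iff_dist_tendsto_zero.1 hA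

lemma lint_HD_tri {w' : Em m → ℝ} (hp : 1 ≤ p) (h1 : IsFuzzyBp p u) (h2 : IsFuzzyBp p w)
    (h3 : IsFuzzyBp p w') :
    (∫⁻ a, (HD u w' a)^p ∂mu01)^(1/p)
      ≤ (∫⁻ a, (HD u w a)^p ∂mu01)^(1/p) + (∫⁻ a, (HD w w' a)^p ∂mu01)^(1/p) := by
  have hp0 : (0:ℝ) < p := lt_of_lt_of_le one_pos hp
  have hmono : ∫⁻ a, (HD u w' a)^p ∂mu01 ≤ ∫⁻ a, ((HD u w + HD w w') a)^p ∂mu01 := by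
    apply lintegral_mono_ae
    filter_upwards [ae_restrict_mem measurableSet_Ioc] with a ha
    apply ENNReal.rpow_le_rpow ?_ hp0.le
    have tri : hausdorffDist (acut u a) (acut w' a) ≤
        hausdorffDist (acut u a) (acut w a) + hausdorffDist (acut w a) (acut w' a) :=
      hausdorffDist_triangle (edist_fin h1 h2 ha ha)
    calc HD u w' a ≤ ENNReal.ofReal (hausdorffDist (acut u a) (acut w a)
          + hausdorffDist (acut w a) (acut w' a)) := ENNReal.ofReal_le_ofReal tri
      _ = (HD u w + HD w w') a := ENNReal.ofReal_add hausdorffDist_nonneg hausdorffDist_nonneg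
  exact le_trans (ENNReal.rpow_le_rpow hmono (by positivity))
    (ENNReal.lintegral_Lp_add_le (aemeas_HD h1 h2) (aemeas_HD h2 h3) hp)

lemma vlim_lp (hp : 1 ≤ p) {u : ℕ → Em m → ℝ} (hu : ∀ n, IsFuzzyBp p (u n))
    {n : ℕ → ℕ} (hn : StrictMono n)
    (hfast : ∀ k, dp p (u (n k)) (u (n (k+1))) < (1/2:ℝ)^k)
    (hcauchy : ∀ ε > (0:ℝ), ∃ N : ℕ, ∀ j ≥ N, ∀ k ≥ N, dp p (u j) (u k) < ε) :
    IntegrableOn (fun a => hausdorffDist (acut (vlim u n) a) ({0} : Set (Em m)) ^ p)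
      (Ioc (0:ℝ) 1) := by
  have hp0 : (0:ℝ) < p := lt_of_lt_of_le one_pos hp
  have hchi := isFuzzyBp_chiz (m := m) hp
  -- a.e. convergence of distances to the origin
  have haeconv : ∀ᵐ a ∂mu01, Tendsto
      (fun k => hausdorffDist (acut (u (n k)) a) ({0} : Set (Em m))) atTop
      (nhds (hausdorffDist (acut (vlim u n) a) ({0} : Set (Em m)))) := by
    filter_upwards [ae_vcut_eq hp hu hfast] with a ⟨ha, hgood, hacut⟩
    have hH := H_tendsto_of_NC_tendsto (Klim_spec hgood) (singleton_nonempty (0 : Em m))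
      Bornology.isBounded_singleton
    rw [← hacut] at hH
    refine hH.congr fun k => ?_
    rw [show (seqNC u n a k : Set (Em m)) = acut (u (n k)) a from NC_coe (hu (n k)) ha]
  -- a.e. measurability of each, and of limit
  have hmeas_k : ∀ k, AEMeasurable
      (fun a => hausdorffDist (acut (u (n k)) a) ({0} : Set (Em m))) mu01 := by
    intro k
    have h1 := (hu (n k)).lp.aestronglyMeasurable.aemeasurable
    have h2 : AEMeasurable
        (fun a => (hausdorffDist (acut (u (n k)) a) ({0} : Set (Em m)) ^ p) ^ (1/p)) mu01 :=
      h1.pow_const _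
    refine h2.congr (Eventually.of_forall fun a => ?_)
    show (hausdorffDist (acut (u (n k)) a) ({0} : Set (Em m)) ^ p) ^ (1/p) = _
    rw [← Real.rpow_mul hausdorffDist_nonneg, mul_one_div_cancel hp0.ne', Real.rpow_one]
  have hmeasv : AEMeasurable
      (fun a => hausdorffDist (acut (vlim u n) a) ({0} : Set (Em m))) mu01 :=
    aemeasurable_of_tendsto_metrizable_ae atTop hmeas_k haeconv
  -- uniform eventual bound on the lintegrals
  obtain ⟨N1, hN1⟩ := hcauchy 1 one_pos
  set B := (∫⁻ a, (HD (u N1) chiz a)^p ∂mu01) with hB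
  set C := ((ENNReal.ofReal ((1:ℝ)^p))^(1/p) + B^(1/p))^p with hC
  have hCfin : C ≠ ⊤ := by
    rw [hC]
    apply (ENNReal.rpow_lt_top_of_nonneg hp0.le _).ne
    apply ENNReal.add_ne_top.2
    constructor
    · exact (ENNReal.rpow_lt_top_of_nonneg (by positivity) ENNReal.ofReal_ne_top).ne
    · exact (ENNReal.rpow_lt_top_of_nonneg (by positivity) (lint_HD_chiz_fin hp (hu N1)).ne).ne
  have hev : ∀ᶠ k in atTop, (∫⁻ a, (HD (u (n k)) chiz a)^p ∂mu01) ≤ C := by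
    filter_upwards [eventually_ge_atTop N1] with k hk
    have h3 := lint_HD_tri hp (hu (n k)) (hu N1) hchi
    have h4 : (∫⁻ a, (HD (u (n k)) (u N1) a)^p ∂mu01) ≤ ENNReal.ofReal ((1:ℝ)^p) :=
      lint_le_of_dp_lt hp (hu (n k)) (hu N1) one_pos
        (hN1 (n k) (le_trans hk hn.le_apply) N1 le_rfl)
    calc ∫⁻ a, (HD (u (n k)) chiz a)^p ∂mu01
        = ((∫⁻ a, (HD (u (n k)) chiz a)^p ∂mu01)^(1/p))^p := by
          rw [← ENNReal.rpow_mul, one_div_mul_cancel hp0.ne', ENNReal.rpow_one]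
      _ ≤ ((ENNReal.ofReal ((1:ℝ)^p))^(1/p) + B^(1/p))^p := by
          apply ENNReal.rpow_le_rpow _ hp0.le
          refine le_trans h3 (add_le_add_left (ENNReal.rpow_le_rpow h4 (by positivity)) _)
      _ = C := rfl
  -- Fatou
  have hfatou : ∫⁻ a, (ENNReal.ofReal
      (hausdorffDist (acut (vlim u n) a) ({0} : Set (Em m))))^p ∂mu01 ≤ C := by
    have hle1 : ∫⁻ a, (ENNReal.ofReal
        (hausdorffDist (acut (vlim u n) a) ({0} : Set (Em m))))^p ∂mu01
        ≤ liminf (fun k => ∫⁻ a, (HD (u (n k)) chiz a)^p ∂mu01) atTop := by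
      refine le_trans (le_of_eq (lintegral_congr_ae ?_))
        (lintegral_liminf_le' fun k => (aemeas_HD (hu (n k)) hchi).pow_const p)
      filter_upwards [haeconv, ae_restrict_mem measurableSet_Ioc] with a hconv ha
      have hconv2 : Tendsto (fun k => (HD (u (n k)) chiz a)^p) atTop
          (nhds ((ENNReal.ofReal
            (hausdorffDist (acut (vlim u n) a) ({0} : Set (Em m))))^p)) := by
        have hcoe : ∀ k, HD (u (n k)) chiz a
            = ENNReal.ofReal (hausdorffDist (acut (u (n k)) a) ({0} : Set (Em m))) := by
          intro k; rw [HD, acut_chiz ha]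
        have hofr : Tendsto (fun k => ENNReal.ofReal
            (hausdorffDist (acut (u (n k)) a) ({0} : Set (Em m)))) atTop
            (nhds (ENNReal.ofReal (hausdorffDist (acut (vlim u n) a) ({0} : Set (Em m))))) :=
          (ENNReal.continuous_ofReal.tendsto _).comp hconv
        have hc1 := ((ENNReal.continuous_rpow_const (y := p)).tendsto _).comp hofr
        refine hc1.congr fun k => ?_
        rw [Function.comp_apply, hcoe k]
      exact hconv2.liminf_eq.symm
    exact le_trans hle1 (le_trans (liminf_le_liminf hev) (le_of_eq (liminf_const C)))
  constructor
  · exact (hmeasv.pow_const p).aestronglyMeasurable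
  · rw [hasFiniteIntegral_iff_ofReal
      (Eventually.of_forall fun a => Real.rpow_nonneg hausdorffDist_nonneg p)]
    have heq : ∫⁻ a, ENNReal.ofReal
        (hausdorffDist (acut (vlim u n) a) ({0} : Set (Em m)) ^ p) ∂mu01
        = ∫⁻ a, (ENNReal.ofReal
          (hausdorffDist (acut (vlim u n) a) ({0} : Set (Em m))))^p ∂mu01 :=
      lintegral_congr fun a =>
        (ENNReal.ofReal_rpow_of_nonneg hausdorffDist_nonneg hp0.le).symm
    rw [heq]
    exact lt_of_le_of_lt hfatou (lt_top_iff_ne_top.2 hCfin)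


end Aux

/-- The metric space `(F_B(ℝ^m)^p, d_p)` is complete: every
Cauchy sequence converges to an element of the space. -/
theorem fuzzyBp_complete {m : ℕ} (p : ℝ) (hp : 1 ≤ p)
    (u : ℕ → Em m → ℝ) (hu : ∀ n, IsFuzzyBp p (u n))
    (hcauchy : ∀ ε > (0:ℝ), ∃ N : ℕ, ∀ j ≥ N, ∀ k ≥ N, dp p (u j) (u k) < ε) :
    ∃ v : Em m → ℝ, IsFuzzyBp p v ∧ Tendsto (fun n => dp p (u n) v) atTop (nhds 0) := by
  obtain ⟨n, hn, hfast⟩ := exists_fast_subseq hcauchy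
  have hv : IsFuzzyBp p (vlim u n) :=
    ⟨fun x => vlim_mem01 (u := u) (n := n) x, vlim_normal hp hu hfast, vlim_usc hp hu hfast,
      fun a ha => (vlim_cut_compact_nonempty hp hu hfast ha).1,
      vlim_lp hp hu hn hfast hcauchy⟩
  refine ⟨vlim u n, hv, ?_⟩
  rw [Metric.tendsto_atTop]
  intro ε hε
  obtain ⟨N, hN⟩ := hcauchy (ε/2) (by linarith)
  refine ⟨N, fun j hj => ?_⟩
  have hdple : dp p (u j) (vlim u n) ≤ ε/2 := by
    apply dp_le_of_lint_le hp (hu j) hv (by linarith)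
    have haeconv : ∀ᵐ a ∂mu01, Tendsto (fun k => (HD (u j) (u (n k)) a)^p) atTop
        (nhds ((HD (u j) (vlim u n) a)^p)) := by
      filter_upwards [ae_vcut_eq hp hu hfast] with a ⟨ha, hgood, hacut⟩
      have hH := H_tendsto_of_NC_tendsto (Klim_spec hgood)
        (acut_nonempty (hu j) ha.2) ((hu j).compactCuts a ha).isBounded
      rw [← hacut] at hH
      have hofr := (ENNReal.continuous_ofReal.tendsto _).comp hH
      have hc1 := ((ENNReal.continuous_rpow_const (y := p)).tendsto _).comp hofr
      have hlimpt : (HD (u j) (vlim u n) a)^p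
          = (ENNReal.ofReal (hausdorffDist (acut (vlim u n) a) (acut (u j) a)))^p := by
        rw [HD, show hausdorffDist (acut (vlim u n) a) (acut (u j) a)
          = hausdorffDist (acut (u j) a) (acut (vlim u n) a) from hausdorffDist_comm]
      rw [hlimpt]
      refine hc1.congr fun k => ?_
      simp only [Function.comp_apply]
      rw [show (seqNC u n a k : Set (Em m)) = acut (u (n k)) a from NC_coe (hu (n k)) ha,
        show hausdorffDist (acut (u (n k)) a) (acut (u j) a)
          = hausdorffDist (acut (u j) a) (acut (u (n k)) a) from hausdorffDist_comm]
      rfl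
    have hlb : ∫⁻ a, (HD (u j) (vlim u n) a)^p ∂mu01
        ≤ liminf (fun k => ∫⁻ a, (HD (u j) (u (n k)) a)^p ∂mu01) atTop := by
      refine le_trans (le_of_eq (lintegral_congr_ae ?_))
        (lintegral_liminf_le' fun k => (aemeas_HD (hu j) (hu (n k))).pow_const p)
      filter_upwards [haeconv] with a hconv
      exact hconv.liminf_eq.symm
    have hev : ∀ᶠ k in atTop, (∫⁻ a, (HD (u j) (u (n k)) a)^p ∂mu01)
        ≤ ENNReal.ofReal ((ε/2)^p) := by
      filter_upwards [eventually_ge_atTop N] with k hk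
      exact lint_le_of_dp_lt hp (hu j) (hu (n k)) (by linarith)
        (hN j hj (n k) (le_trans hk hn.le_apply))
    exact le_trans hlb (le_trans (liminf_le_liminf hev) (le_of_eq (liminf_const _)))
  have hdp0 : 0 ≤ dp p (u j) (vlim u n) := by
    rw [dp_eq_lint hp (hu j) hv]; exact ENNReal.toReal_nonneg
  rw [Real.dist_eq, sub_zero, abs_of_nonneg hdp0]
  linarith

end
end

section
/- F_B(ℝ^m), the set of normal, upper semi-continuous fuzzy sets with compact support, is dense in (F_B(ℝ^m)^p, d_p). In particular, for u ∈ F_B(ℝ^m)^p, the truncations u^{(1/n)} (defined by u^{(1/n)}(x) = u(x) if u(x) ≥ 1/n and 0 otherwise) lie in F_B(ℝ^m) and d_p(u^{(1/n)}, u) → 0. -/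
open Metric Set MeasureTheory Filter

noncomputable section

section FuzzyAux

variable {m : ℕ}

lemma acut_antitone' {u : Em m → ℝ} {a b : ℝ} (h : b ≤ a) : acut u a ⊆ acut u b :=
  fun _ hx => le_trans h hx

lemma acut_nonempty' {u : Em m → ℝ} (hn : ∃ x, u x = 1) {a : ℝ} (ha : a ≤ 1) :
    (acut u a).Nonempty := by
  obtain ⟨x, hx⟩ := hn
  exact ⟨x, by simp only [acut, mem_setOf_eq, hx]; exact ha⟩

lemma acut_ftrunc_of_le' {u : Em m → ℝ} {a b : ℝ} (ha : 0 < a) (hab : a ≤ b) :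
    acut (ftrunc u a) b = acut u b := by
  ext x
  simp only [acut, ftrunc, mem_setOf_eq]
  constructor
  · intro h
    by_cases hx : a ≤ u x
    · rwa [if_pos hx] at h
    · rw [if_neg hx] at h; linarith
  · intro h
    rw [if_pos (le_trans hab h)]; exact h

lemma acut_ftrunc_of_lt' {u : Em m → ℝ} {a b : ℝ} (hb : 0 < b) (hba : b ≤ a) :
    acut (ftrunc u a) b = acut u a := by
  ext x
  simp only [acut, ftrunc, mem_setOf_eq]
  by_cases hx : a ≤ u x
  · rw [if_pos hx]
    exact ⟨fun _ => hx, fun h => le_trans hba h⟩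
  · rw [if_neg hx]
    exact ⟨fun h => absurd (lt_of_lt_of_le hb h) (lt_irrefl 0), fun h => absurd h hx⟩

lemma usc_ftrunc' {u : Em m → ℝ} (husc : UpperSemicontinuous u)
    (h0 : ∀ x, 0 ≤ u x) {a : ℝ} (ha : 0 < a) :
    UpperSemicontinuous (ftrunc u a) := by
  intro x t ht
  by_cases hx : a ≤ u x
  · have hxt : u x < t := by simpa [ftrunc, if_pos hx] using ht
    filter_upwards [husc x t hxt] with y hy
    simp only [ftrunc]
    split
    · exact hy
    · exact lt_of_le_of_lt (h0 x) hxt |>.trans_le le_rfl |> fun _ => lt_of_le_of_lt (le_refl 0) (lt_of_le_of_lt (h0 y) hy) |> fun _ => by positivity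
  · have hxa : u x < a := lt_of_not_ge hx
    have ht0 : (0:ℝ) < t := by simpa [ftrunc, if_neg hx] using ht
    filter_upwards [husc x a hxa] with y hy
    simp only [ftrunc, if_neg (not_le.mpr hy)]
    exact ht0

lemma hausdorffDist_origin_mono' {A B : Set (Em m)} (hAB : A ⊆ B) (hA : A.Nonempty)
    (hB : Bornology.IsBounded B) :
    hausdorffDist A ({0} : Set (Em m)) ≤ hausdorffDist B ({0} : Set (Em m)) := by
  have hBne : B.Nonempty := hA.mono hAB
  have fin : EMetric.hausdorffEdist B ({0} : Set (Em m)) ≠ ⊤ :=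
    hausdorffEdist_ne_top_of_nonempty_of_bounded hBne (singleton_nonempty 0) hB
      Bornology.isBounded_singleton
  have key : ∀ x ∈ B, dist x (0 : Em m) ≤ hausdorffDist B ({0} : Set (Em m)) := by
    intro x hx
    have := infDist_le_hausdorffDist_of_mem hx fin
    rwa [infDist_singleton] at this
  apply hausdorffDist_le_of_infDist hausdorffDist_nonneg
  · intro x hx
    rw [infDist_singleton]
    exact key x (hAB hx)
  · intro x hx
    obtain ⟨a₀, ha₀⟩ := hA
    rcases hx with rfl
    calc infDist (0 : Em m) A ≤ dist (0 : Em m) a₀ := infDist_le_dist_of_mem ha₀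
      _ = dist a₀ (0 : Em m) := dist_comm _ _
      _ ≤ _ := key a₀ (hAB ha₀)

end FuzzyAux


/-- `F_B(ℝ^m)` is dense in `(F_B(ℝ^m)^p, d_p)`; in particular
the truncations `u^{(1/n)}` lie in `F_B(ℝ^m)` and converge to `u` in `d_p`. -/
theorem fuzzyB_dense_in_fuzzyBp {m : ℕ} (p : ℝ) (hp : 1 ≤ p)
    (u : Em m → ℝ) (hu : IsFuzzyBp p u) :
    (∀ n : ℕ, IsFuzzyB (ftrunc u (1 / ((n : ℝ) + 1)))) ∧
    Tendsto (fun n : ℕ => dp p (ftrunc u (1 / ((n : ℝ) + 1))) u) atTop (nhds 0) ∧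
    (∀ ε > (0:ℝ), ∃ v : Em m → ℝ, IsFuzzyB v ∧ IsFuzzyBp p v ∧ dp p v u < ε) := by
  have hp0 : (0:ℝ) < p := lt_of_lt_of_le zero_lt_one hp
  have hp0' : p ≠ 0 := ne_of_gt hp0
  have hu0 : ∀ x, 0 ≤ u x := fun x => (hu.mem01 x).1
  set A : ℕ → ℝ := fun n => 1 / ((n : ℝ) + 1) with hAdef
  have hApos : ∀ n, 0 < A n := fun n => by positivity
  have hAle1 : ∀ n, A n ≤ 1 := fun n => by
    rw [hAdef]
    rw [div_le_one (by positivity)]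
    linarith [Nat.cast_nonneg (α := ℝ) n]
  have hAmem : ∀ n, A n ∈ Ioc (0:ℝ) 1 := fun n => ⟨hApos n, hAle1 n⟩
  -- Part 1
  have part1 : ∀ n : ℕ, IsFuzzyB (ftrunc u (A n)) := by
    intro n
    refine ⟨?_, ?_, ?_, ?_⟩
    · intro x
      simp only [ftrunc]
      split
      · exact hu.mem01 x
      · exact ⟨le_refl 0, zero_le_one⟩
    · obtain ⟨x, hx⟩ := hu.normal
      exact ⟨x, by simp [ftrunc, hx, hAle1 n]⟩
    · exact usc_ftrunc' hu.usc hu0 (hApos n)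
    · have hsub : {x | 0 < ftrunc u (A n) x} ⊆ acut u (A n) := by
        intro x hx
        simp only [ftrunc, mem_setOf_eq] at hx
        by_cases h : A n ≤ u x
        · exact h
        · rw [if_neg h] at hx; exact absurd hx (lt_irrefl 0)
      exact ((hu.compactCuts (A n) (hAmem n)).isBounded).subset hsub
  -- key Hausdorff bound
  have hHaus : ∀ n : ℕ, ∀ b ∈ Ioc (0:ℝ) 1, b ≤ A n →
      hausdorffDist (acut u (A n)) (acut u b) ≤
        2 * hausdorffDist (acut u b) ({0} : Set (Em m)) := by
    intro n b hb hbA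
    have hAn : (acut u (A n)).Nonempty := acut_nonempty' hu.normal (hAle1 n)
    have hBn : (acut u b).Nonempty := acut_nonempty' hu.normal hb.2
    have hAc : IsCompact (acut u (A n)) := hu.compactCuts _ (hAmem n)
    have hBc : IsCompact (acut u b) := hu.compactCuts _ hb
    have hsub : acut u (A n) ⊆ acut u b := acut_antitone' hbA
    have fin1 : EMetric.hausdorffEdist (acut u (A n)) ({0} : Set (Em m)) ≠ ⊤ :=
      hausdorffEdist_ne_top_of_nonempty_of_bounded hAn (singleton_nonempty 0)
        hAc.isBounded Bornology.isBounded_singleton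
    calc hausdorffDist (acut u (A n)) (acut u b)
        ≤ hausdorffDist (acut u (A n)) ({0} : Set (Em m)) +
          hausdorffDist ({0} : Set (Em m)) (acut u b) := hausdorffDist_triangle fin1
      _ ≤ 2 * hausdorffDist (acut u b) ({0} : Set (Em m)) := by
            have h1 : hausdorffDist ({0} : Set (Em m)) (acut u b) =
                hausdorffDist (acut u b) ({0} : Set (Em m)) := hausdorffDist_comm
            have h2 := hausdorffDist_origin_mono' hsub hAn hBc.isBounded
            linarith
  -- Part 2
  set S : ℕ → ℝ := fun n =>
    ∫ a in Ioc (0:ℝ) 1, hausdorffDist (acut (ftrunc u (A n)) a) (acut u a) ^ p with hSdef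
  set G : ℝ → ℝ := fun b =>
    2 ^ p * hausdorffDist (acut u b) ({0} : Set (Em m)) ^ p with hGdef
  have hGint : IntegrableOn G (Ioc (0:ℝ) 1) := hu.lp.const_mul _
  set B : ℕ → ℝ → ℝ := fun n => (Ioc (0:ℝ) (A n)).indicator G with hBdef
  have hBint : ∀ n, Integrable (B n) (volume.restrict (Ioc (0:ℝ) 1)) := fun n =>
    hGint.indicator measurableSet_Ioc
  have hG0 : ∀ b, 0 ≤ G b := fun b => by
    apply mul_nonneg (Real.rpow_nonneg (by norm_num) _)
      (Real.rpow_nonneg hausdorffDist_nonneg _)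
  have hB0 : ∀ n b, 0 ≤ B n b := fun n b =>
    Set.indicator_nonneg (fun x _ => hG0 x) b
  have hptle : ∀ n, ∀ b ∈ Ioc (0:ℝ) 1,
      hausdorffDist (acut (ftrunc u (A n)) b) (acut u b) ^ p ≤ B n b := by
    intro n b hb
    by_cases hba : b ≤ A n
    · rw [acut_ftrunc_of_lt' hb.1 hba]
      rw [hBdef]
      simp only [Set.indicator_of_mem (show b ∈ Ioc (0:ℝ) (A n) from ⟨hb.1, hba⟩)]
      rw [hGdef]
      calc hausdorffDist (acut u (A n)) (acut u b) ^ p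
          ≤ (2 * hausdorffDist (acut u b) ({0} : Set (Em m))) ^ p :=
            Real.rpow_le_rpow hausdorffDist_nonneg (hHaus n b hb hba) (le_of_lt hp0)
        _ = 2 ^ p * hausdorffDist (acut u b) ({0} : Set (Em m)) ^ p :=
            Real.mul_rpow (by norm_num) hausdorffDist_nonneg
    · rw [acut_ftrunc_of_le' (hApos n) (le_of_not_ge hba)]
      rw [hausdorffDist_self_zero, Real.zero_rpow hp0']
      exact hB0 n b
  have hSle : ∀ n, S n ≤ ∫ b in Ioc (0:ℝ) 1, B n b := by
    intro n
    apply integral_mono_of_nonneg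
    · exact ae_of_all _ fun b => Real.rpow_nonneg hausdorffDist_nonneg _
    · exact hBint n
    · exact ae_restrict_of_forall_mem measurableSet_Ioc (hptle n)
  have hS0 : ∀ n, 0 ≤ S n := fun n =>
    integral_nonneg fun b => Real.rpow_nonneg hausdorffDist_nonneg _
  have hTtend : Tendsto (fun n => ∫ b in Ioc (0:ℝ) 1, B n b) atTop (nhds 0) := by
    have := tendsto_integral_of_dominated_convergence (μ := volume.restrict (Ioc (0:ℝ) 1))
      (F := B) (f := fun _ => (0:ℝ)) (fun b => ‖G b‖)
      (fun n => (hBint n).aestronglyMeasurable)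
      (hGint.norm)
      (fun n => ae_of_all _ fun b => by
        rw [Real.norm_of_nonneg (hB0 n b)]
        calc B n b ≤ G b := by
              rw [hBdef]; exact Set.indicator_le_self' (fun x _ => hG0 x) b
          _ ≤ ‖G b‖ := le_abs_self _)
      ?_
    · simpa using this
    · apply ae_restrict_of_forall_mem measurableSet_Ioc
      intro b hb
      obtain ⟨N, hN⟩ := exists_nat_one_div_lt (K := ℝ) hb.1
      apply tendsto_atTop_of_eventually_const (i₀ := N)
      intro n hn
      have hAnb : A n < b := by
        calc A n ≤ A N := by
              rw [hAdef]
              apply one_div_le_one_div_of_le (by positivity)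
              exact_mod_cast by exact_mod_cast add_le_add_left (Nat.cast_le.mpr hn) 1
          _ < b := hN
      rw [hBdef]
      exact Set.indicator_of_notMem (fun h => absurd h.2 (not_le.mpr hAnb)) G
  have hStend : Tendsto S atTop (nhds 0) :=
    tendsto_of_tendsto_of_tendsto_of_le_of_le tendsto_const_nhds hTtend hS0 hSle
  have part2 : Tendsto (fun n : ℕ => dp p (ftrunc u (A n)) u) atTop (nhds 0) := by
    have hcont : ContinuousAt (fun x : ℝ => x ^ (1/p)) 0 :=
      Real.continuousAt_rpow_const 0 (1/p) (Or.inr (by positivity))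
    have := hcont.tendsto.comp hStend
    rw [Real.zero_rpow (by positivity : (1:ℝ)/p ≠ 0)] at this
    simpa [dp, Function.comp_def, hSdef] using this
  -- Part 3: IsFuzzyBp for truncations
  have part3aux : ∀ n : ℕ, IsFuzzyBp p (ftrunc u (A n)) := by
    intro n
    have h1 := part1 n
    refine ⟨h1.mem01, h1.normal, h1.usc, ?_, ?_⟩
    · intro b hb
      by_cases hba : b ≤ A n
      · rw [acut_ftrunc_of_lt' hb.1 hba]
        exact hu.compactCuts _ (hAmem n)
      · rw [acut_ftrunc_of_le' (hApos n) (le_of_not_ge hba)]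
        exact hu.compactCuts _ hb
    · set c : ℝ := hausdorffDist (acut u (A n)) ({0} : Set (Em m)) ^ p with hcdef
      have hind1 : Integrable ((Ioc (0:ℝ) (A n)).indicator (fun _ => c))
          (volume.restrict (Ioc (0:ℝ) 1)) := by
        have : IntegrableOn (fun _ => c) (Ioc (0:ℝ) 1) :=
          (integrableOn_const_iff).mpr (Or.inr measure_Ioc_lt_top)
        exact this.indicator measurableSet_Ioc
      have hind2 : Integrable ((Ioc (A n) 1).indicator
          (fun b => hausdorffDist (acut u b) ({0} : Set (Em m)) ^ p))
          (volume.restrict (Ioc (0:ℝ) 1)) :=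
        hu.lp.indicator measurableSet_Ioc
      apply (hind1.add hind2).congr
      apply ae_restrict_of_forall_mem measurableSet_Ioc
      intro b hb
      simp only [Pi.add_apply]
      by_cases hba : b ≤ A n
      · rw [Set.indicator_of_mem (show b ∈ Ioc (0:ℝ) (A n) from ⟨hb.1, hba⟩),
          Set.indicator_of_notMem
            (fun (h : b ∈ Ioc (A n) 1) => absurd h.1 (not_lt.mpr hba)),
          acut_ftrunc_of_lt' hb.1 hba, add_zero, hcdef]
      · have hba' : A n < b := lt_of_not_ge hba
        rw [Set.indicator_of_notMem
            (fun (h : b ∈ Ioc (0:ℝ) (A n)) => absurd h.2 (not_le.mpr hba')),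
          Set.indicator_of_mem (show b ∈ Ioc (A n) 1 from ⟨hba', hb.2⟩),
          acut_ftrunc_of_le' (hApos n) (le_of_lt hba'), zero_add]
  refine ⟨part1, part2, ?_⟩
  intro ε hε
  have := part2.eventually_lt_const hε
  obtain ⟨n, hn⟩ := this.exists
  exact ⟨ftrunc u (A n), part1 n, part3aux n, hn⟩


end
end
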